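/- arXiv:1405.4758 — 2 statements merged into one kernel-verified Lean document; each statement's English description precedes it below -/
import Mathlib

section
/- Let X_k(n), n ≥ 1, be i.i.d. Bernoulli(θ_k) sequences for k = 1,…,K (independent across k), with a predictable sampling rule B(n) ∈ {0,1}^K, empirical counts t_k(n) and empirical means θ̂_k(n). Then for all constants 0 ≤ C_k ≤ θ_k and integers t̄_k ≥ 1: P[for all k: θ̂_k(n) ≤ C_k and t_k(n) ≥ t̄_k] ≤ ∏_{k=1}^K exp(−t̄_k · I(C_k, θ_k)). -/
open MeasureTheory ProbabilityTheory Finset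

/-- KL divergence between Bernoulli distributions with means `x` and `y`. -/
noncomputable def klBer (x y : ℝ) : ℝ :=
  x * Real.log (x / y) + (1 - x) * Real.log ((1 - x) / (1 - y))

lemma klBer_eq_aux (y : ℝ) (hy0 : 0 < y) (hy1 : y < 1) {x : ℝ} (hx : 0 ≤ x) (hx1 : x < 1) :
    klBer x y = (x * Real.log x - x * Real.log y)
      + ((1 - x) * Real.log (1 - x) - (1 - x) * Real.log (1 - y)) := by
  rcases eq_or_lt_of_le hx with h | h
  · simp [klBer, ← h, Real.log_div one_ne_zero (by linarith : (1:ℝ) - y ≠ 0)]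
  · unfold klBer
    rw [Real.log_div h.ne' hy0.ne', Real.log_div (by linarith : (1:ℝ) - x ≠ 0)
      (by linarith : (1:ℝ) - y ≠ 0)]
    ring

lemma klBer_nonneg' {x y : ℝ} (hx : 0 ≤ x) (hxy : x ≤ y) (hy0 : 0 < y) (hy1 : y < 1) :
    0 ≤ klBer x y := by
  have hx1 : x < 1 := lt_of_le_of_lt hxy hy1
  have h1 : x - y ≤ x * Real.log (x / y) := by
    rcases eq_or_lt_of_le hx with h | h
    · simp [← h]; linarith
    · have hlog : Real.log (y / x) ≤ y / x - 1 := Real.log_le_sub_one_of_pos (by positivity)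
      have : x * Real.log (y / x) ≤ x * (y / x - 1) := by
        exact mul_le_mul_of_nonneg_left hlog hx
      rw [mul_sub, mul_div_cancel₀ _ h.ne'] at this
      have hinv : Real.log (x / y) = - Real.log (y / x) := by
        rw [← Real.log_inv]; congr 1; field_simp
      nlinarith
  have h2 : y - x ≤ (1 - x) * Real.log ((1 - x) / (1 - y)) := by
    have h1y : (0:ℝ) < 1 - y := by linarith
    have h1x : (0:ℝ) < 1 - x := by linarith
    have hlog : Real.log ((1 - y) / (1 - x)) ≤ (1 - y) / (1 - x) - 1 :=
      Real.log_le_sub_one_of_pos (by positivity)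
    have : (1 - x) * Real.log ((1 - y) / (1 - x)) ≤ (1 - x) * ((1 - y) / (1 - x) - 1) :=
      mul_le_mul_of_nonneg_left hlog h1x.le
    rw [mul_sub, mul_div_cancel₀ _ h1x.ne'] at this
    have hinv : Real.log ((1 - x) / (1 - y)) = - Real.log ((1 - y) / (1 - x)) := by
      rw [← Real.log_inv]; congr 1; field_simp
    nlinarith
  unfold klBer; linarith

lemma klBer_eq_LP {x y : ℝ} (hx : 0 < x) (hxy : x ≤ y) (hy0 : 0 < y) (hy1 : y < 1) :
    klBer x y = Real.log (x * (1 - y) / (y * (1 - x))) * x - Real.log ((1 - y) / (1 - x)) := by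
  have hx1 : x < 1 := lt_of_le_of_lt hxy hy1
  have h1x : (0:ℝ) < 1 - x := by linarith
  have h1y : (0:ℝ) < 1 - y := by linarith
  unfold klBer
  rw [Real.log_div hx.ne' hy0.ne', Real.log_div h1x.ne' h1y.ne',
    Real.log_div (by positivity : (x * (1 - y)) ≠ 0) (by positivity : (y * (1 - x)) ≠ 0),
    Real.log_mul hx.ne' h1y.ne', Real.log_mul hy0.ne' h1x.ne',
    Real.log_div h1y.ne' h1x.ne']
  ring

lemma indepFun_of_measurable_of_disjoint {Ω : Type*} {mΩ : MeasurableSpace Ω} {μ : Measure Ω}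
    {ι : Type*} (Y : ι → Ω → ℝ) (hY : ∀ i, Measurable (Y i))
    (hind : iIndepFun Y μ)
    (T₁ T₂ : Set ι) (hd : Disjoint T₁ T₂) {f g : Ω → ℝ}
    (hf : Measurable[⨆ i ∈ T₁, MeasurableSpace.comap (Y i) inferInstance] f)
    (hg : Measurable[⨆ i ∈ T₂, MeasurableSpace.comap (Y i) inferInstance] g) :
    IndepFun f g μ := by
  have h := indep_iSup_of_disjoint (fun i => measurable_iff_comap_le.mp (hY i)) hind.iIndep hd
  exact indep_of_indep_of_le_right
    (indep_of_indep_of_le_left h (measurable_iff_comap_le.mp hf))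
    (measurable_iff_comap_le.mp hg)

set_option maxHeartbeats 2000000 in
theorem multiarm_core
    {Ω : Type*} {mΩ : MeasurableSpace Ω} (μ : Measure Ω) [IsProbabilityMeasure μ]
    (K : ℕ) (hK : 0 < K) (θ : Fin K → ℝ) (hθ : ∀ k, θ k ∈ Set.Ioo (0 : ℝ) 1)
    (X : Fin K → ℕ → Ω → ℝ)
    (hXvec : ∀ n, StronglyMeasurable (fun ω => fun k => X k n ω))
    (hX01 : ∀ k n ω, X k n ω = 0 ∨ X k n ω = 1)
    (hind : iIndepFun
      (fun (p : Fin K × ℕ) ω => X p.1 p.2 ω) μ)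
    (hmean : ∀ k n, (μ {ω | X k n ω = 1}).toReal = θ k)
    (B : ℕ → Ω → Fin K → ℝ) (hB01 : ∀ n ω k, B n ω k = 0 ∨ B n ω k = 1)
    (hB0 : ∀ ω ω', B 0 ω = B 0 ω')
    (hBpred : ∀ n,
      StronglyMeasurable[(Filtration.natural (fun n ω => fun k => X k n ω) hXvec) n]
        (B (n + 1)))
    (t : Fin K → ℕ → Ω → ℝ)
    (ht : ∀ k n ω, t k n ω = ∑ s ∈ Finset.range n, B s ω k)
    (hatθ : Fin K → ℕ → Ω → ℝ)
    (hhatθ : ∀ k n ω, hatθ k n ω =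
      if t k n ω = 0 then 0
      else (∑ s ∈ Finset.range n, B s ω k * X k s ω) / t k n ω)
    (n : ℕ) (C : Fin K → ℝ) (hC : ∀ k, 0 ≤ C k ∧ C k ≤ θ k) (hCpos : ∀ k, 0 < C k)
    (tbar : Fin K → ℕ) (htbar : ∀ k, 1 ≤ tbar k) :
    (μ {ω | ∀ k, hatθ k n ω ≤ C k ∧ (tbar k : ℝ) ≤ t k n ω}).toReal ≤
      ∏ k, Real.exp (-(tbar k : ℝ) * klBer (C k) (θ k)) := by
  classical
  have hne : Nonempty Ω := by
    rcases isEmpty_or_nonempty Ω with h | h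
    · exfalso
      have h1 : μ Set.univ = 1 := measure_univ
      rw [Set.univ_eq_empty_iff.mpr h] at h1
      simp at h1
    · exact h
  obtain ⟨ω₀⟩ := hne
  have hθ0 : ∀ k, 0 < θ k := fun k => (hθ k).1
  have hθ1 : ∀ k, θ k < 1 := fun k => (hθ k).2
  have hC1 : ∀ k, C k < 1 := fun k => lt_of_le_of_lt (hC k).2 (hθ1 k)
  have h1θ : ∀ k, (0:ℝ) < 1 - θ k := fun k => by linarith [hθ1 k]
  have h1C : ∀ k, (0:ℝ) < 1 - C k := fun k => by linarith [hC1 k]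
  set La : Fin K → ℝ := fun k => Real.log (C k * (1 - θ k) / (θ k * (1 - C k))) with hLa
  set Pp : Fin K → ℝ := fun k => Real.log ((1 - θ k) / (1 - C k)) with hPp
  have hexpL : ∀ k, Real.exp (La k) = C k * (1 - θ k) / (θ k * (1 - C k)) := fun k =>
    Real.exp_log (by have h1 := hCpos k; have h2 := hθ0 k; have h3 := h1θ k; have h4 := h1C k
                     positivity)
  have hexpP : ∀ k, Real.exp (Pp k) = (1 - θ k) / (1 - C k) := fun k =>
    Real.exp_log (by have h3 := h1θ k; have h4 := h1C k; positivity)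
  have hLle : ∀ k, La k ≤ 0 := by
    intro k
    apply Real.log_nonpos
    · have h1 := hCpos k; have h2 := hθ0 k; have h3 := h1θ k; have h4 := h1C k; positivity
    · rw [div_le_one (by have h2 := hθ0 k; have h4 := h1C k; positivity)]
      nlinarith [(hC k).2, hθ1 k, hCpos k, hθ0 k]
  have hPL : ∀ k, 1 - θ k + θ k * Real.exp (La k) = Real.exp (Pp k) := by
    intro k
    rw [hexpL, hexpP]
    have h2 := (hθ0 k).ne'
    have h4 := (h1C k).ne'
    field_simp
    ring
  have hkl : ∀ k, klBer (C k) (θ k) = La k * C k - Pp k := fun k =>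
    klBer_eq_LP (hCpos k) (hC k).2 (hθ0 k) (hθ1 k)
  have hklnn : ∀ k, 0 ≤ klBer (C k) (θ k) := fun k =>
    klBer_nonneg' (hCpos k).le (hC k).2 (hθ0 k) (hθ1 k)
  -- measurability infrastructure
  set M : Set (Fin K × ℕ) → MeasurableSpace Ω :=
    fun T => ⨆ p ∈ T, MeasurableSpace.comap (fun ω => X p.1 p.2 ω) inferInstance with hM
  have hXm : ∀ k s, Measurable (X k s) := fun k s =>
    (measurable_pi_apply k).comp (hXvec s).measurable
  have hMle : ∀ T, M T ≤ mΩ := fun T =>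
    iSup₂_le fun p _ => measurable_iff_comap_le.mp (hXm p.1 p.2)
  have hMmono : ∀ {T T' : Set (Fin K × ℕ)}, T ⊆ T' → M T ≤ M T' := fun h => biSup_mono h
  have hXmT : ∀ k s (T : Set (Fin K × ℕ)), (k, s) ∈ T → Measurable[M T] (X k s) := by
    intro k s T hp
    have h1 : Measurable[MeasurableSpace.comap (fun ω => X k s ω) inferInstance] (X k s) :=
      measurable_iff_comap_le.mpr le_rfl
    exact h1.mono (le_iSup₂ (f := fun (p : Fin K × ℕ) (_ : p ∈ T) =>
      MeasurableSpace.comap (fun ω => X p.1 p.2 ω) inferInstance) (k, s) hp) le_rfl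
  have hpi : ∀ j : ℕ, MeasurableSpace.comap (fun ω => fun k => X k j ω)
      (MeasurableSpace.pi) = ⨆ k : Fin K,
        MeasurableSpace.comap (fun ω => X k j ω) inferInstance := by
    intro j
    show MeasurableSpace.comap _
      (⨆ k : Fin K, MeasurableSpace.comap (fun b : Fin K → ℝ => b k) inferInstance) = _
    rw [MeasurableSpace.comap_iSup]
    simp only [MeasurableSpace.comap_comp]
    rfl
  have hFle : ∀ r, ((Filtration.natural (fun n ω => fun k => X k n ω) hXvec) r
      : MeasurableSpace Ω) ≤ M {p | p.2 ≤ r} := by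
    intro r
    show (⨆ j, ⨆ _ : j ≤ r,
      MeasurableSpace.comap (fun ω => fun k => X k j ω) MeasurableSpace.pi) ≤ _
    refine iSup₂_le fun j hj => ?_
    rw [hpi j]
    refine iSup_le fun k => ?_
    exact le_iSup₂ (f := fun (p : Fin K × ℕ) (_ : p ∈ {p : Fin K × ℕ | p.2 ≤ r}) =>
      MeasurableSpace.comap (fun ω => X p.1 p.2 ω) inferInstance) (k, j) hj
  have hBm0 : ∀ k (m' : MeasurableSpace Ω), Measurable[m'] (fun ω => B 0 ω k) := by
    intro k m'
    have : (fun ω => B 0 ω k) = fun _ => B 0 ω₀ k := funext fun ω => by rw [hB0 ω ω₀]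
    rw [this]; exact measurable_const
  have hBmT : ∀ (m s : ℕ), s ≤ m → ∀ k, Measurable[M {p | p.2 < m}] (fun ω => B s ω k) := by
    intro m s hs k
    cases s with
    | zero => exact hBm0 k _
    | succ r =>
      have h1 : Measurable[(Filtration.natural (fun n ω => fun k => X k n ω) hXvec) r]
          (fun ω => B (r+1) ω k) := (measurable_pi_apply k).comp (hBpred r).measurable
      exact h1.mono (le_trans (hFle r) (hMmono (fun p hp => by
        simp only [Set.mem_setOf_eq] at *; omega))) le_rfl
  have hBm : ∀ s k, Measurable (fun ω => B s ω k) := fun s k =>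
    (hBmT s s le_rfl k).mono (hMle _) le_rfl
  have hIF : ∀ (T₁ T₂ : Set (Fin K × ℕ)) (f g : Ω → ℝ), Disjoint T₁ T₂ →
      Measurable[M T₁] f → Measurable[M T₂] g → IndepFun f g μ := by
    intro T₁ T₂ f g hd hf hg
    have h := indep_iSup_of_disjoint (m := fun p : Fin K × ℕ =>
        MeasurableSpace.comap (fun ω => X p.1 p.2 ω) inferInstance)
      (fun p => measurable_iff_comap_le.mp (hXm p.1 p.2)) hind.iIndep hd
    exact indep_of_indep_of_le_right
      (indep_of_indep_of_le_left h (measurable_iff_comap_le.mp hf))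
      (measurable_iff_comap_le.mp hg)
  -- boundedness machinery
  set Bdd : (Ω → ℝ) → Prop := fun f => ∃ c : ℝ, ∀ ω, |f ω| ≤ c with hBdd
  have bdd_int : ∀ f : Ω → ℝ, Measurable f → Bdd f → Integrable f μ := by
    rintro f hf ⟨c, hc⟩
    exact (integrable_const c).mono' hf.aestronglyMeasurable
      (Filter.Eventually.of_forall fun ω => by simpa using hc ω)
  have bdd_mul : ∀ f g : Ω → ℝ, Bdd f → Bdd g → Bdd (fun ω => f ω * g ω) := by
    rintro f g ⟨c, hc⟩ ⟨d, hd⟩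
    refine ⟨max c 0 * max d 0, fun ω => ?_⟩
    rw [abs_mul]
    exact mul_le_mul ((hc ω).trans (le_max_left _ _)) ((hd ω).trans (le_max_left _ _))
      (abs_nonneg _) (le_max_right _ _)
  have bdd_prod : ∀ (s : Finset (Fin K)) (f : Fin K → Ω → ℝ), (∀ i ∈ s, Bdd (f i)) →
      Bdd (fun ω => ∏ i ∈ s, f i ω) := by
    intro s f hf
    induction s using Finset.induction with
    | empty => exact ⟨1, fun ω => by simp⟩
    | insert a s' ha ih =>
      have h1 := bdd_mul _ _ (hf a (mem_insert_self a s')) (ih fun i hi => hf i (mem_insert_of_mem hi))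
      refine ⟨h1.choose, fun ω => ?_⟩
      show |∏ i ∈ insert a s', f i ω| ≤ _
      rw [Finset.prod_insert ha]
      exact h1.choose_spec ω
  have bdd_prodN : ∀ (s : Finset ℕ) (f : ℕ → Ω → ℝ), (∀ i ∈ s, Bdd (f i)) →
      Bdd (fun ω => ∏ i ∈ s, f i ω) := by
    intro s f hf
    induction s using Finset.induction with
    | empty => exact ⟨1, fun ω => by simp⟩
    | insert a s' ha ih =>
      have h1 := bdd_mul _ _ (hf a (mem_insert_self a s')) (ih fun i hi => hf i (mem_insert_of_mem hi))
      refine ⟨h1.choose, fun ω => ?_⟩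
      show |∏ i ∈ insert a s', f i ω| ≤ _
      rw [Finset.prod_insert ha]
      exact h1.choose_spec ω
  have hB01' : ∀ s ω k, 0 ≤ B s ω k ∧ B s ω k ≤ 1 := fun s ω k => by
    rcases hB01 s ω k with h | h <;> simp [h]
  have hX01' : ∀ k s ω, 0 ≤ X k s ω ∧ X k s ω ≤ 1 := fun k s ω => by
    rcases hX01 k s ω with h | h <;> simp [h]
  have bddB : ∀ s k, Bdd (fun ω => B s ω k) := fun s k =>
    ⟨1, fun ω => abs_le.mpr ⟨by linarith [(hB01' s ω k).1], (hB01' s ω k).2⟩⟩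
  have bddX : ∀ k s, Bdd (X k s) := fun k s =>
    ⟨1, fun ω => abs_le.mpr ⟨by linarith [(hX01' k s ω).1], (hX01' k s ω).2⟩⟩
  -- the martingale
  set G : ℕ → Ω → ℝ := fun m ω => ∏ s ∈ Finset.range m, ∏ k,
    Real.exp (La k * (B s ω k * X k s ω) - B s ω k * Pp k) with hG
  have hGpos : ∀ m ω, 0 < G m ω := fun m ω =>
    Finset.prod_pos fun s _ => Finset.prod_pos fun k _ => Real.exp_pos _
  have bddexp : ∀ s k, Bdd (fun ω =>
      Real.exp (La k * (B s ω k * X k s ω) - B s ω k * Pp k)) := by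
    intro s k
    refine ⟨Real.exp (|La k| + |Pp k|), fun ω => ?_⟩
    rw [abs_of_pos (Real.exp_pos _), Real.exp_le_exp]
    have h1 := hB01' s ω k; have h2 := hX01' k s ω
    have hbx : |La k * (B s ω k * X k s ω)| ≤ |La k| := by
      rw [abs_mul, abs_of_nonneg (mul_nonneg h1.1 h2.1)]
      exact mul_le_of_le_one_right (abs_nonneg _) (mul_le_one₀ h1.2 h2.1 h2.2)
    have hbp : |B s ω k * Pp k| ≤ |Pp k| := by
      rw [abs_mul, abs_of_nonneg h1.1]
      exact mul_le_of_le_one_left (abs_nonneg _) h1.2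
    have := le_abs_self (La k * (B s ω k * X k s ω))
    have := neg_abs_le (B s ω k * Pp k)
    linarith
  have bddG : ∀ m, Bdd (G m) := fun m =>
    bdd_prodN (Finset.range m) _ fun s _ => bdd_prod univ _ fun k _ => bddexp s k
  have hGmT : ∀ m, Measurable[M {p | p.2 < m}] (G m) := by
    intro m
    apply Finset.measurable_prod
    intro s hs
    apply Finset.measurable_prod
    intro k _
    refine Measurable.exp ?_
    exact (measurable_const.mul ((hBmT m s (le_of_lt (mem_range.mp hs)) k).mul
      (hXmT k s _ (mem_range.mp hs)))).sub ((hBmT m s (le_of_lt (mem_range.mp hs)) k).mul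
      measurable_const)
  have hGm : ∀ m, Measurable (G m) := fun m => (hGmT m).mono (hMle _) le_rfl
  have hGint : ∀ m, Integrable (G m) μ := fun m => bdd_int _ (hGm m) (bddG m)
  -- expectations of products of rewards
  have hEX : ∀ k m, ∫ ω, X k m ω ∂μ = θ k := by
    intro k m
    have hset : MeasurableSet {ω | X k m ω = 1} := hXm k m (measurableSet_singleton 1)
    have hXi : ∀ ω, X k m ω = Set.indicator {ω | X k m ω = 1} (fun _ => (1:ℝ)) ω := by
      intro ω
      rcases hX01 k m ω with h | h
      · rw [Set.indicator_of_notMem (show ω ∉ {ω | X k m ω = 1} from by simp [h])]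
        exact h
      · rw [Set.indicator_of_mem (show ω ∈ {ω | X k m ω = 1} from h)]
        exact h
    rw [integral_congr_ae (Filter.Eventually.of_forall hXi),
      integral_indicator_const _ hset, measureReal_def, hmean k m, smul_eq_mul, mul_one]
  have hΦmT : ∀ (m : ℕ) (S : Finset (Fin K)), Measurable[M {p | p.1 ∈ S ∧ p.2 = m}]
      (fun ω => ∏ k ∈ S, X k m ω) := fun m S =>
    Finset.measurable_prod _ fun k hk => hXmT k m _ ⟨hk, rfl⟩
  have hΦm : ∀ (m : ℕ) (S : Finset (Fin K)), Measurable (fun ω => ∏ k ∈ S, X k m ω) :=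
    fun m S => (hΦmT m S).mono (hMle _) le_rfl
  have hEΦ : ∀ (m : ℕ) (S : Finset (Fin K)), ∫ ω, ∏ k ∈ S, X k m ω ∂μ = ∏ k ∈ S, θ k := by
    intro m S
    induction S using Finset.induction with
    | empty => simp
    | insert a S' ha ih =>
      have hindep : IndepFun (X a m) (fun ω => ∏ k ∈ S', X k m ω) μ := by
        refine hIF {p | p.1 = a ∧ p.2 = m} {p | p.1 ∈ S' ∧ p.2 = m} _ _ ?_ ?_ ?_
        · exact Set.disjoint_left.mpr fun p hp hp2 => ha (hp.1 ▸ hp2.1)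
        · exact hXmT a m _ ⟨rfl, rfl⟩
        · exact hΦmT m S'
      have hmul := hindep.integral_mul_eq_mul_integral
        (bdd_int _ (hXm a m) (bddX a m)).aestronglyMeasurable (bdd_int _ (hΦm m S') (bdd_prod S' _ fun k _ => bddX k m)).aestronglyMeasurable
      calc ∫ ω, ∏ k ∈ insert a S', X k m ω ∂μ
          = ∫ ω, X a m ω * ∏ k ∈ S', X k m ω ∂μ := by
            refine integral_congr_ae (Filter.Eventually.of_forall fun ω => ?_)
            beta_reduce
            rw [Finset.prod_insert ha]
        _ = (∫ ω, X a m ω ∂μ) * ∫ ω, ∏ k ∈ S', X k m ω ∂μ := by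
            simpa [Pi.mul_apply] using hmul
        _ = ∏ k ∈ insert a S', θ k := by rw [hEX, ih, Finset.prod_insert ha]
  -- the martingale property
  have key : ∀ m, ∫ ω, G (m+1) ω ∂μ = ∫ ω, G m ω ∂μ := by
    intro m
    set c : Fin K → ℝ := fun k => Real.exp (La k) - 1 with hc
    set D : Ω → ℝ := fun ω => ∏ k, Real.exp (-(B m ω k * Pp k)) with hD
    have hDmT : Measurable[M {p | p.2 < m}] D := by
      apply Finset.measurable_prod
      intro k _
      exact (((hBmT m m le_rfl k).mul measurable_const).neg).exp
    have bddD : Bdd D := by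
      refine bdd_prod univ _ fun k _ => ⟨Real.exp |Pp k|, fun ω => ?_⟩
      rw [abs_of_pos (Real.exp_pos _), Real.exp_le_exp]
      have h1 := hB01' m ω k
      have : |B m ω k * Pp k| ≤ |Pp k| := by
        rw [abs_mul, abs_of_nonneg h1.1]
        exact mul_le_of_le_one_left (abs_nonneg _) h1.2
      linarith [neg_abs_le (B m ω k * Pp k)]
    have hFmT : ∀ S : Finset (Fin K), Measurable[M {p | p.2 < m}]
        (fun ω => G m ω * D ω * ∏ k ∈ S, B m ω k) := fun S =>
      ((hGmT m).mul hDmT).mul (Finset.measurable_prod _ fun k _ => hBmT m m le_rfl k)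
    have hFm : ∀ S : Finset (Fin K), Measurable
        (fun ω => G m ω * D ω * ∏ k ∈ S, B m ω k) := fun S => (hFmT S).mono (hMle _) le_rfl
    have bddF : ∀ S : Finset (Fin K), Bdd (fun ω => G m ω * D ω * ∏ k ∈ S, B m ω k) := fun S =>
      bdd_mul _ _ (bdd_mul _ _ (bddG m) bddD) (bdd_prod S _ fun k _ => bddB m k)
    have hfac : ∀ ω, G (m+1) ω = ∑ S ∈ (univ : Finset (Fin K)).powerset,
        (G m ω * D ω * ∏ k ∈ S, B m ω k) * ((∏ k ∈ S, X k m ω) * ∏ k ∈ S, c k) := by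
      intro ω
      have h1 : ∀ k : Fin K, Real.exp (La k * (B m ω k * X k m ω) - B m ω k * Pp k)
          = Real.exp (-(B m ω k * Pp k)) * (B m ω k * X k m ω * c k + 1) := by
        intro k
        rcases hB01 m ω k with hb | hb <;> rcases hX01 k m ω with hx | hx <;>
          simp [hb, hx, hc, Real.exp_sub, Real.exp_neg, div_eq_mul_inv, mul_comm]
      calc G (m+1) ω
          = G m ω * ∏ k, Real.exp (La k * (B m ω k * X k m ω) - B m ω k * Pp k) := by
            rw [hG]; exact Finset.prod_range_succ _ m
        _ = G m ω * (D ω * ∏ k, (B m ω k * X k m ω * c k + 1)) := by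
            rw [Finset.prod_congr rfl fun k _ => h1 k, Finset.prod_mul_distrib]
        _ = ∑ S ∈ (univ : Finset (Fin K)).powerset,
            (G m ω * D ω * ∏ k ∈ S, B m ω k) * ((∏ k ∈ S, X k m ω) * ∏ k ∈ S, c k) := by
            rw [Finset.prod_add]
            simp only [Finset.prod_const_one, mul_one]
            rw [Finset.mul_sum, Finset.mul_sum]
            refine Finset.sum_congr rfl fun S hS => ?_
            rw [Finset.prod_mul_distrib, Finset.prod_mul_distrib]
            ring
    calc ∫ ω, G (m+1) ω ∂μ
        = ∫ ω, ∑ S ∈ (univ : Finset (Fin K)).powerset,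
            (G m ω * D ω * ∏ k ∈ S, B m ω k) * ((∏ k ∈ S, X k m ω) * ∏ k ∈ S, c k) ∂μ :=
          integral_congr_ae (Filter.Eventually.of_forall hfac)
      _ = ∑ S ∈ (univ : Finset (Fin K)).powerset, ∫ ω,
            (G m ω * D ω * ∏ k ∈ S, B m ω k) * ((∏ k ∈ S, X k m ω) * ∏ k ∈ S, c k) ∂μ := by
          refine integral_finset_sum _ fun S _ => ?_
          refine bdd_int _ ((hFm S).mul ((hΦm m S).mul measurable_const)) ?_
          exact bdd_mul _ _ (bddF S) (bdd_mul _ _ (bdd_prod S _ fun k _ => bddX k m)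
            ⟨|∏ k ∈ S, c k|, fun ω => le_refl _⟩)
      _ = ∑ S ∈ (univ : Finset (Fin K)).powerset,
            (∫ ω, G m ω * D ω * ∏ k ∈ S, B m ω k ∂μ) * ∏ k ∈ S, (θ k * c k) := by
          refine Finset.sum_congr rfl fun S _ => ?_
          have e1 : (fun ω => (G m ω * D ω * ∏ k ∈ S, B m ω k) *
              ((∏ k ∈ S, X k m ω) * ∏ k ∈ S, c k))
              = fun ω => ((G m ω * D ω * ∏ k ∈ S, B m ω k) * (∏ k ∈ S, X k m ω))
                * ∏ k ∈ S, c k := funext fun ω => by ring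
          rw [e1, integral_mul_const]
          have hindep : IndepFun (fun ω => G m ω * D ω * ∏ k ∈ S, B m ω k)
              (fun ω => ∏ k ∈ S, X k m ω) μ := by
            refine hIF {p | p.2 < m} {p | p.1 ∈ S ∧ p.2 = m} _ _ ?_ (hFmT S) (hΦmT m S)
            exact Set.disjoint_left.mpr fun p hp hp2 => by
              simp only [Set.mem_setOf_eq] at hp hp2; omega
          have hmul := hindep.integral_mul_eq_mul_integral
            (bdd_int _ (hFm S) (bddF S)).aestronglyMeasurable
            (bdd_int _ (hΦm m S) (bdd_prod S _ fun k _ => bddX k m)).aestronglyMeasurable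
          have e2 : ∫ ω, (G m ω * D ω * ∏ k ∈ S, B m ω k) * (∏ k ∈ S, X k m ω) ∂μ
              = (∫ ω, G m ω * D ω * ∏ k ∈ S, B m ω k ∂μ) * ∫ ω, ∏ k ∈ S, X k m ω ∂μ := by
            simpa [Pi.mul_apply] using hmul
          rw [e2, hEΦ m S]
          simp only [Finset.prod_mul_distrib]
          ring
      _ = ∫ ω, ∑ S ∈ (univ : Finset (Fin K)).powerset,
            (G m ω * D ω * ∏ k ∈ S, B m ω k) * ∏ k ∈ S, (θ k * c k) ∂μ := by
          rw [integral_finset_sum _ fun S _ => ?_]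
          · refine Finset.sum_congr rfl fun S _ => ?_
            rw [integral_mul_const]
          · refine bdd_int _ ((hFm S).mul measurable_const) ?_
            exact bdd_mul _ _ (bddF S) ⟨|∏ k ∈ S, (θ k * c k)|, fun ω => le_refl _⟩
      _ = ∫ ω, G m ω ∂μ := by
          refine integral_congr_ae (Filter.Eventually.of_forall fun ω => ?_)
          beta_reduce
          have e3 : ∑ S ∈ (univ : Finset (Fin K)).powerset,
              (G m ω * D ω * ∏ k ∈ S, B m ω k) * ∏ k ∈ S, (θ k * c k)
              = G m ω * (D ω * ∏ k, (B m ω k * (θ k * c k) + 1)) := by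
            rw [Finset.prod_add]
            simp only [Finset.prod_const_one, mul_one]
            rw [Finset.mul_sum, Finset.mul_sum]
            refine Finset.sum_congr rfl fun S _ => ?_
            simp only [Finset.prod_mul_distrib]
            ring
          rw [e3]
          have hone : D ω * ∏ k, (B m ω k * (θ k * c k) + 1) = 1 := by
            rw [hD, ← Finset.prod_mul_distrib]
            refine Finset.prod_eq_one fun k _ => ?_
            rcases hB01 m ω k with hb | hb
            · simp [hb]
            · have hpl := hPL k
              rw [hb, hc]
              simp only [one_mul]
              rw [Real.exp_neg]
              have : θ k * (Real.exp (La k) - 1) + 1 = Real.exp (Pp k) := by linarith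
              rw [this]
              exact inv_mul_cancel₀ (Real.exp_pos _).ne'
          rw [hone, mul_one]
  have hG1 : ∀ m, ∫ ω, G m ω ∂μ = 1 := by
    intro m
    induction m with
    | zero => simp [hG]
    | succ m ih => rw [key m, ih]
  -- conclusion via Markov
  set E : Set Ω := {ω | ∀ k, hatθ k n ω ≤ C k ∧ (tbar k : ℝ) ≤ t k n ω} with hE
  have htm : ∀ k, Measurable (fun ω => t k n ω) := by
    intro k
    have e : (fun ω => t k n ω) = fun ω => ∑ s ∈ Finset.range n, B s ω k :=
      funext fun ω => ht k n ω
    rw [e]; exact Finset.measurable_sum _ fun s _ => hBm s k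
  have hhm : ∀ k, Measurable (fun ω => hatθ k n ω) := by
    intro k
    have e : (fun ω => hatθ k n ω) = fun ω => if t k n ω = 0 then 0
        else (∑ s ∈ Finset.range n, B s ω k * X k s ω) / t k n ω :=
      funext fun ω => hhatθ k n ω
    rw [e]
    refine Measurable.ite ?_ measurable_const ?_
    · exact htm k (measurableSet_singleton 0)
    · exact (Finset.measurable_sum _ fun s _ => (hBm s k).mul (hXm k s)).div (htm k)
  have hEmeas : MeasurableSet E := by
    have e : E = ⋂ k, ({ω | hatθ k n ω ≤ C k} ∩ {ω | (tbar k : ℝ) ≤ t k n ω}) := by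
      ext ω; simp [hE, Set.mem_iInter, forall_and]
    rw [e]
    exact MeasurableSet.iInter fun k =>
      (measurableSet_le (hhm k) measurable_const).inter
        (measurableSet_le measurable_const (htm k))
  set R : ℝ := ∏ k, Real.exp ((tbar k : ℝ) * klBer (C k) (θ k)) with hR
  have hRpos : 0 < R := Finset.prod_pos fun k _ => Real.exp_pos _
  have hGEb : ∀ ω ∈ E, R ≤ G n ω := by
    intro ω hω
    have hGn : G n ω = ∏ k, Real.exp (La k * (∑ s ∈ Finset.range n, B s ω k * X k s ω)
        - t k n ω * Pp k) := by
      calc G n ω = ∏ k, ∏ s ∈ Finset.range n,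
          Real.exp (La k * (B s ω k * X k s ω) - B s ω k * Pp k) := by
            rw [hG]; exact Finset.prod_comm
        _ = ∏ k, Real.exp (La k * (∑ s ∈ Finset.range n, B s ω k * X k s ω)
            - t k n ω * Pp k) := by
            refine Finset.prod_congr rfl fun k _ => ?_
            rw [← Real.exp_sum]
            congr 1
            rw [Finset.sum_sub_distrib, ← Finset.mul_sum, ← Finset.sum_mul, ht k n ω]
    rw [hGn, hR]
    refine Finset.prod_le_prod (fun k _ => (Real.exp_pos _).le) fun k _ => ?_
    rw [Real.exp_le_exp]
    obtain ⟨h1, h2⟩ := hω k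
    have htbar1 : (1:ℝ) ≤ (tbar k : ℝ) := by exact_mod_cast htbar k
    have htpos : 0 < t k n ω := lt_of_lt_of_le (by linarith) h2
    have hSle : (∑ s ∈ Finset.range n, B s ω k * X k s ω) ≤ C k * t k n ω := by
      rw [hhatθ k n ω, if_neg htpos.ne'] at h1
      exact (div_le_iff₀ htpos).mp h1
    have hmulL : La k * (C k * t k n ω) ≤ La k * (∑ s ∈ Finset.range n, B s ω k * X k s ω) :=
      mul_le_mul_of_nonpos_left hSle (hLle k)
    calc (tbar k : ℝ) * klBer (C k) (θ k) ≤ t k n ω * klBer (C k) (θ k) :=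
          mul_le_mul_of_nonneg_right h2 (hklnn k)
      _ = La k * (C k * t k n ω) - t k n ω * Pp k := by rw [hkl k]; ring
      _ ≤ La k * (∑ s ∈ Finset.range n, B s ω k * X k s ω) - t k n ω * Pp k := by linarith
  have hmark : (μ E).toReal * R ≤ 1 := by
    have hind_le : ∀ ω, Set.indicator E (fun _ => R) ω ≤ G n ω := by
      intro ω
      by_cases hω : ω ∈ E
      · rw [Set.indicator_of_mem hω]; exact hGEb ω hω
      · rw [Set.indicator_of_notMem hω]; exact (hGpos n ω).le
    have h1 : ∫ ω, Set.indicator E (fun _ => R) ω ∂μ ≤ ∫ ω, G n ω ∂μ :=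
      integral_mono ((integrable_const R).indicator hEmeas) (hGint n) hind_le
    rw [integral_indicator_const _ hEmeas, smul_eq_mul, hG1 n] at h1
    exact h1
  have hfinal : (μ E).toReal ≤ R⁻¹ := by
    rw [← one_div]
    rw [le_div_iff₀ hRpos]
    exact hmark
  calc (μ E).toReal ≤ R⁻¹ := hfinal
    _ = ∏ k, Real.exp (-(tbar k : ℝ) * klBer (C k) (θ k)) := by
      rw [hR, ← Finset.prod_inv_distrib]
      exact Finset.prod_congr rfl fun k _ => by rw [← Real.exp_neg, neg_mul]

theorem multiarm_underestimate_bound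
    {Ω : Type*} {mΩ : MeasurableSpace Ω} (μ : Measure Ω) [IsProbabilityMeasure μ]
    (K : ℕ) (hK : 0 < K) (θ : Fin K → ℝ) (hθ : ∀ k, θ k ∈ Set.Ioo (0 : ℝ) 1)
    -- i.i.d. Bernoulli(θ k) rewards, independent across arms and rounds
    (X : Fin K → ℕ → Ω → ℝ)
    (hXvec : ∀ n, StronglyMeasurable (fun ω => fun k => X k n ω))
    (hX01 : ∀ k n ω, X k n ω = 0 ∨ X k n ω = 1)
    (hind : iIndepFun
      (fun (p : Fin K × ℕ) ω => X p.1 p.2 ω) μ)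
    (hmean : ∀ k n, (μ {ω | X k n ω = 1}).toReal = θ k)
    -- predictable sampling rule with values in {0,1}
    (B : ℕ → Ω → Fin K → ℝ) (hB01 : ∀ n ω k, B n ω k = 0 ∨ B n ω k = 1)
    (hB0 : ∀ ω ω', B 0 ω = B 0 ω')
    (hBpred : ∀ n,
      StronglyMeasurable[(Filtration.natural (fun n ω => fun k => X k n ω) hXvec) n]
        (B (n + 1)))
    -- empirical counts and means
    (t : Fin K → ℕ → Ω → ℝ)
    (ht : ∀ k n ω, t k n ω = ∑ s ∈ Finset.range n, B s ω k)
    (hatθ : Fin K → ℕ → Ω → ℝ)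
    (hhatθ : ∀ k n ω, hatθ k n ω =
      if t k n ω = 0 then 0
      else (∑ s ∈ Finset.range n, B s ω k * X k s ω) / t k n ω)
    (n : ℕ) (C : Fin K → ℝ) (hC : ∀ k, 0 ≤ C k ∧ C k ≤ θ k)
    (tbar : Fin K → ℕ) (htbar : ∀ k, 1 ≤ tbar k) :
    (μ {ω | ∀ k, hatθ k n ω ≤ C k ∧ (tbar k : ℝ) ≤ t k n ω}).toReal ≤
      ∏ k, Real.exp (-(tbar k : ℝ) * klBer (C k) (θ k)) := by
  classical
  have hθ0 : ∀ k, 0 < θ k := fun k => (hθ k).1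
  have hθ1 : ∀ k, θ k < 1 := fun k => (hθ k).2
  have hC1 : ∀ k, C k < 1 := fun k => lt_of_le_of_lt (hC k).2 (hθ1 k)
  obtain ⟨k0, -, hk0⟩ := Finset.exists_min_image (univ : Finset (Fin K)) θ ⟨⟨0, hK⟩, mem_univ _⟩
  have hδ : 0 < θ k0 := hθ0 k0
  -- the bound for the perturbed thresholds
  have hbound : ∀ ε : ℝ, 0 < ε → ε ≤ θ k0 →
      (μ {ω | ∀ k, hatθ k n ω ≤ C k ∧ (tbar k : ℝ) ≤ t k n ω}).toReal ≤
        ∏ k, Real.exp (-(tbar k : ℝ) * klBer (max (C k) ε) (θ k)) := by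
    intro ε hε hεδ
    have hsub : {ω | ∀ k, hatθ k n ω ≤ C k ∧ (tbar k : ℝ) ≤ t k n ω} ⊆
        {ω | ∀ k, hatθ k n ω ≤ max (C k) ε ∧ (tbar k : ℝ) ≤ t k n ω} := by
      intro ω hω k
      exact ⟨le_trans (hω k).1 (le_max_left _ _), (hω k).2⟩
    have h1 : (μ {ω | ∀ k, hatθ k n ω ≤ C k ∧ (tbar k : ℝ) ≤ t k n ω}).toReal ≤
        (μ {ω | ∀ k, hatθ k n ω ≤ max (C k) ε ∧ (tbar k : ℝ) ≤ t k n ω}).toReal :=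
      ENNReal.toReal_mono (measure_ne_top μ _) (measure_mono hsub)
    refine le_trans h1 ?_
    exact multiarm_core μ K hK θ hθ X hXvec hX01 hind hmean B hB01 hB0 hBpred t ht hatθ hhatθ
      n (fun k => max (C k) ε)
      (fun k => ⟨le_trans (hC k).1 (le_max_left _ _),
        max_le (hC k).2 (le_trans hεδ (hk0 k (mem_univ k)))⟩)
      (fun k => lt_of_lt_of_le hε (le_max_right _ _)) tbar htbar
  -- continuity of the right-hand side as ε → 0⁺
  have htends : Filter.Tendsto
      (fun ε : ℝ => ∏ k, Real.exp (-(tbar k : ℝ) * klBer (max (C k) ε) (θ k)))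
      (nhdsWithin 0 (Set.Ioi 0))
      (nhds (∏ k, Real.exp (-(tbar k : ℝ) * klBer (C k) (θ k)))) := by
    refine tendsto_finset_prod _ fun k _ => ?_
    have hklt : Filter.Tendsto (fun ε : ℝ => klBer (max (C k) ε) (θ k))
        (nhdsWithin 0 (Set.Ioi 0)) (nhds (klBer (C k) (θ k))) := by
      set g : ℝ → ℝ := fun x => (x * Real.log x - x * Real.log (θ k))
        + ((1 - x) * Real.log (1 - x) - (1 - x) * Real.log (1 - θ k)) with hg
      have hgc : Continuous g := by
        apply Continuous.add
        · exact Real.continuous_mul_log.sub (continuous_id.mul continuous_const)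
        · refine Continuous.sub ?_ ((continuous_const.sub continuous_id).mul continuous_const)
          exact Real.continuous_mul_log.comp (continuous_const.sub continuous_id)
      have h2 : Filter.Tendsto (fun ε : ℝ => g (max (C k) ε))
          (nhdsWithin 0 (Set.Ioi 0)) (nhds (g (max (C k) 0))) := by
        refine Filter.Tendsto.mono_left ?_ nhdsWithin_le_nhds
        exact (hgc.tendsto _).comp ((continuous_const.max continuous_id).tendsto 0)
      rw [max_eq_left (hC k).1] at h2
      have hev : ∀ᶠ ε : ℝ in nhdsWithin 0 (Set.Ioi 0),
          g (max (C k) ε) = klBer (max (C k) ε) (θ k) := by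
        filter_upwards [Ioo_mem_nhdsGT_of_mem (show (0:ℝ) ∈ Set.Ico (0:ℝ) 1 from
          ⟨le_rfl, one_pos⟩)] with ε hε
        exact (klBer_eq_aux (θ k) (hθ0 k) (hθ1 k)
          (le_trans (hC k).1 (le_max_left _ _)) (max_lt (hC1 k) hε.2)).symm
      have hgoal : g (C k) = klBer (C k) (θ k) :=
        (klBer_eq_aux (θ k) (hθ0 k) (hθ1 k) (hC k).1 (hC1 k)).symm
      rw [hgoal] at h2
      exact Filter.Tendsto.congr' hev h2
    exact (Real.continuous_exp.tendsto _).comp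
      ((hklt.const_mul (-(tbar k : ℝ))).congr (fun ε => rfl))
  refine ge_of_tendsto htends ?_
  filter_upwards [Ioc_mem_nhdsGT_of_mem (show (0:ℝ) ∈ Set.Ico (0:ℝ) (θ k0) from
    ⟨le_rfl, hδ⟩)] with ε hε
  exact hbound ε hε.1 hε.2
end

section
/- Deviation bound for well-sampled rounds: let X_k(t) be i.i.d. Bernoulli(θ_k), ε > 0, and let Λ ⊆ ℕ be a random set of rounds admitting a decomposition Λ ⊆ ∪_{s≥1} Λ(s) where each Λ(s) has at most one element, the event n ∈ Λ(s) is F_n-measurable, and n ∈ Λ(s) implies t_k(n) ≥ εs. Then for all δ > 0, E[ Σ_{n≥1} 1{n ∈ Λ, |θ̂_k(n) − θ_k| > δ} ] ≤ 1/(εδ²). -/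
open MeasureTheory ProbabilityTheory Finset Real


private lemma Dpos {p : ℝ} (hp0 : 0 ≤ p) (hp1 : p ≤ 1) (u : ℝ) :
    0 < 1 - p + p * Real.exp u := by
  rcases eq_or_lt_of_le hp1 with rfl | h
  · have := Real.exp_pos u; nlinarith
  · nlinarith [mul_nonneg hp0 (Real.exp_pos u).le]

private lemma hoeffding_bernoulli {p : ℝ} (hp0 : 0 ≤ p) (hp1 : p ≤ 1) (u : ℝ) :
    (1 - p) * Real.exp (u * (0 - p)) + p * Real.exp (u * (1 - p)) ≤ Real.exp (u ^ 2 / 8) := by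
  set D : ℝ → ℝ := fun v => 1 - p + p * Real.exp v with hD
  have hDpos : ∀ v, 0 < D v := fun v => Dpos hp0 hp1 v
  set φ : ℝ → ℝ := fun v => p + v / 4 - p * Real.exp v / D v with hφ
  set g : ℝ → ℝ := fun v => v * p + v ^ 2 / 8 - Real.log (D v) with hg
  have hDder : ∀ v, HasDerivAt D (p * Real.exp v) v := fun v =>
    ((Real.hasDerivAt_exp v).const_mul p).const_add (1 - p)
  have hgder : ∀ v, HasDerivAt g (φ v) v := by
    intro v
    have hlog : HasDerivAt (fun w => Real.log (D w)) (p * Real.exp v / D v) v :=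
      (hDder v).log (hDpos v).ne'
    have h1 : HasDerivAt (fun w : ℝ => w * p + w ^ 2 / 8) (p + v / 4) v := by
      have : HasDerivAt (fun w : ℝ => w * p + w ^ 2 / 8) (1 * p + ((2:ℕ):ℝ) * v ^ (2 - 1) / 8) v :=
        ((hasDerivAt_id v).mul_const p).add ((hasDerivAt_pow 2 v).div_const 8)
      convert this using 1
      simp; ring
    exact (h1.sub hlog).congr_deriv (by simp [hφ]; try ring)
  have hφder : ∀ v, HasDerivAt φ
      (1 / 4 - (p * Real.exp v * D v - p * Real.exp v * (p * Real.exp v)) / D v ^ 2) v := by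
    intro v
    have hdiv : HasDerivAt (fun w => p * Real.exp w / D w)
        ((p * Real.exp v * D v - p * Real.exp v * (p * Real.exp v)) / D v ^ 2) v :=
      ((Real.hasDerivAt_exp v).const_mul p).div (hDder v) (hDpos v).ne'
    have h1 : HasDerivAt (fun w : ℝ => p + w / 4) (1 / 4) v := by
      exact ((hasDerivAt_const v p).add ((hasDerivAt_id v).div_const 4)).congr_deriv (by norm_num)
    exact h1.sub hdiv
  have hφ'nonneg : ∀ v, 0 ≤ 1 / 4 -
      (p * Real.exp v * D v - p * Real.exp v * (p * Real.exp v)) / D v ^ 2 := by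
    intro v
    have hD2 : 0 < D v ^ 2 := pow_pos (hDpos v) 2
    rw [sub_nonneg, div_le_iff₀ hD2]
    have ha : (0:ℝ) ≤ 1 - p := by linarith
    have hb : 0 ≤ p * Real.exp v := mul_nonneg hp0 (Real.exp_pos v).le
    have : D v = (1 - p) + p * Real.exp v := rfl
    nlinarith [sq_nonneg ((1 - p) - p * Real.exp v)]
  have hφmono : Monotone φ :=
    monotone_of_deriv_nonneg (fun v => (hφder v).differentiableAt)
      (fun v => by rw [(hφder v).deriv]; exact hφ'nonneg v)
  have hφ0 : φ 0 = 0 := by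
    have : D 0 = 1 := by simp [hD, Real.exp_zero]; try ring
    simp [hφ, this, Real.exp_zero]
  have hg0 : g 0 = 0 := by
    have : D 0 = 1 := by simp [hD, Real.exp_zero]; try ring
    simp [hg, this]
  have hgnonneg : ∀ v, 0 ≤ g v := by
    intro v
    have hdiff : Differentiable ℝ g := fun w => (hgder w).differentiableAt
    rcases le_total 0 v with h | h
    · have hmono : MonotoneOn g (Set.Ici 0) := by
        apply monotoneOn_of_deriv_nonneg (convex_Ici 0) hdiff.continuous.continuousOn
          (hdiff.differentiableOn)
        intro x hx
        rw [interior_Ici] at hx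
        rw [(hgder x).deriv]
        have := hφmono (le_of_lt hx)
        rw [hφ0] at this; exact this
      have := hmono (Set.self_mem_Ici) (Set.mem_Ici.mpr h) h
      rw [hg0] at this; exact this
    · have hanti : AntitoneOn g (Set.Iic 0) := by
        apply antitoneOn_of_deriv_nonpos (convex_Iic 0) hdiff.continuous.continuousOn
          (hdiff.differentiableOn)
        intro x hx
        rw [interior_Iic] at hx
        rw [(hgder x).deriv]
        have := hφmono (le_of_lt hx)
        rw [hφ0] at this; exact this
      have := hanti (Set.mem_Iic.mpr h) (Set.self_mem_Iic) h
      rw [hg0] at this; exact this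
  -- conclude
  have hlogle : Real.log (D u) ≤ u * p + u ^ 2 / 8 := by
    have := hgnonneg u; simp only [hg] at this; linarith
  have hDle : D u ≤ Real.exp (u * p + u ^ 2 / 8) :=
    (Real.log_le_iff_le_exp (hDpos u)).mp hlogle
  have key : Real.exp (u * (0 - p)) * D u ≤ Real.exp (u ^ 2 / 8) := by
    calc Real.exp (u * (0 - p)) * D u ≤ Real.exp (u * (0 - p)) * Real.exp (u * p + u ^ 2 / 8) :=
          mul_le_mul_of_nonneg_left hDle (Real.exp_pos _).le
      _ = Real.exp (u ^ 2 / 8) := by rw [← Real.exp_add]; ring_nf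
  calc (1 - p) * Real.exp (u * (0 - p)) + p * Real.exp (u * (1 - p))
      = Real.exp (u * (0 - p)) * D u := by
        simp only [hD]
        rw [show u * (1 - p) = u * (0 - p) + u by ring, Real.exp_add]
        ring
    _ ≤ Real.exp (u ^ 2 / 8) := key

private lemma bernoulli_mgf_le {Ω : Type*} {mΩ : MeasurableSpace Ω} (μ : Measure Ω)
    [IsProbabilityMeasure μ] (Y : Ω → ℝ) (hY : Measurable Y)
    (hY01 : ∀ ω, Y ω = 0 ∨ Y ω = 1) {p : ℝ} (hp0 : 0 ≤ p) (hp1 : p ≤ 1)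
    (hm : (μ {ω | Y ω = 1}).toReal = p) (u : ℝ) :
    ∫ ω, Real.exp (u * (Y ω - p)) ∂μ ≤ Real.exp (u ^ 2 / 8) := by
  have hYint : Integrable Y μ := by
    refine (integrable_const (1 : ℝ)).mono' hY.aestronglyMeasurable (ae_of_all _ fun ω => ?_)
    rcases hY01 ω with h | h <;> simp [h]
  have hrw : (fun ω => Real.exp (u * (Y ω - p)))
      = fun ω => Real.exp (u * (0 - p)) + (Real.exp (u * (1 - p)) - Real.exp (u * (0 - p))) * Y ω := by
    funext ω
    rcases hY01 ω with h | h <;> rw [h] <;> ring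
  have hEY : ∫ ω, Y ω ∂μ = p := by
    have hset : MeasurableSet {ω | Y ω = 1} := hY (measurableSet_singleton 1)
    have : Y = Set.indicator {ω | Y ω = 1} (fun _ => (1:ℝ)) := by
      funext ω
      rcases hY01 ω with h | h
      · have : ω ∉ {ω | Y ω = 1} := by simp [Set.mem_setOf_eq, h]
        simp [Set.indicator_of_notMem this, h]
      · have : ω ∈ {ω | Y ω = 1} := h
        simp [Set.indicator_of_mem this, h]
    rw [this, integral_indicator_const _ hset]
    simp [measureReal_def, hm]
  calc ∫ ω, Real.exp (u * (Y ω - p)) ∂μ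
      = ∫ ω, (Real.exp (u * (0 - p)) + (Real.exp (u * (1 - p)) - Real.exp (u * (0 - p))) * Y ω) ∂μ := by
        rw [hrw]
    _ = Real.exp (u * (0 - p)) + (Real.exp (u * (1 - p)) - Real.exp (u * (0 - p))) * p := by
        rw [integral_add (integrable_const _) (hYint.const_mul _), integral_const,
          integral_const_mul, hEY]
        simp
    _ = (1 - p) * Real.exp (u * (0 - p)) + p * Real.exp (u * (1 - p)) := by ring
    _ ≤ Real.exp (u ^ 2 / 8) := hoeffding_bernoulli hp0 hp1 u

private lemma maximal_ineq
    {Ω : Type*} {mΩ : MeasurableSpace Ω} (μ : Measure Ω) [IsProbabilityMeasure μ]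
    (θ : ℝ) (hθ0 : 0 ≤ θ) (hθ1 : θ ≤ 1)
    (X : ℕ → Ω → ℝ) (hXmeas : ∀ n, StronglyMeasurable (X n))
    (hX01 : ∀ n ω, X n ω = 0 ∨ X n ω = 1)
    (hind : iIndepFun X μ)
    (hmean : ∀ n, (μ {ω | X n ω = 1}).toReal = θ)
    (B : ℕ → Ω → ℝ) (hB01 : ∀ n ω, B n ω = 0 ∨ B n ω = 1)
    (hB0 : ∀ ω ω', B 0 ω = B 0 ω')
    (hBpred : ∀ n, StronglyMeasurable[(Filtration.natural X hXmeas) n] (B (n + 1)))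
    (δ : ℝ) (hδ : 0 < δ) (σ : ℝ) (hσ : σ = 1 ∨ σ = -1) (c : ℝ) (hc : 0 < c) :
    μ {ω | ∃ n, c ≤ (∑ k ∈ Finset.range n, B k ω) ∧
        δ * (∑ k ∈ Finset.range n, B k ω) < σ * (∑ k ∈ Finset.range n, B k ω * (X k ω - θ))}
      ≤ ENNReal.ofReal (Real.exp (-(2 * δ ^ 2 * c))) := by
  classical
  rcases isEmpty_or_nonempty Ω with hE | hne
  · have : (Set.univ : Set Ω) = ∅ := Set.univ_eq_empty_iff.mpr hE
    calc μ _ ≤ μ Set.univ := measure_mono (Set.subset_univ _)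
      _ = 0 := by rw [this, measure_empty]
      _ ≤ _ := zero_le
  set ℱ := Filtration.natural X hXmeas with hℱ
  set V : ℕ → Ω → ℝ := fun n ω => ∑ k ∈ Finset.range n, B k ω with hV
  set S : ℕ → Ω → ℝ := fun n ω => ∑ k ∈ Finset.range n, B k ω * (X k ω - θ) with hS
  set M : ℕ → Ω → ℝ := fun n ω => Real.exp (4 * σ * δ * S n ω - 2 * δ ^ 2 * V n ω) with hM
  set P : ℕ → Ω → Prop := fun n ω => c ≤ V n ω ∧ δ * V n ω < σ * S n ω with hP
  set G : ℕ → MeasurableSpace Ω := fun n => Nat.casesOn n ⊥ fun k => ℱ k with hG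
  have hσ1 : σ ^ 2 = 1 := by rcases hσ with h | h <;> rw [h] <;> norm_num
  have hσabs : |σ| = 1 := by rcases hσ with h | h <;> rw [h] <;> norm_num
  -- basic measurability
  have hG_le : ∀ n, G n ≤ mΩ := fun n => Nat.casesOn n bot_le fun k => ℱ.le k
  have hG_mono : ∀ a b, a ≤ b → G a ≤ G b := by
    intro a b hab
    cases a with
    | zero => exact bot_le
    | succ k => cases b with
      | zero => omega
      | succ m => exact ℱ.mono (Nat.succ_le_succ_iff.mp hab)
  have hXmeasF : ∀ j n, j ≤ n → Measurable[ℱ n] (X j) := by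
    intro j n hj
    refine measurable_iff_comap_le.mpr ?_
    exact le_iSup₂ (f := fun k (_ : k ≤ n) => MeasurableSpace.comap (X k) inferInstance) j hj
  have hBmeasF : ∀ k n, k ≤ n → Measurable[ℱ n] (B k) := by
    intro k n hk
    cases k with
    | zero =>
      have : B 0 = fun _ => B 0 hne.some := funext fun ω => hB0 ω hne.some
      rw [this]; exact measurable_const
    | succ j =>
      exact ((hBpred j).measurable).mono (ℱ.mono (le_trans (Nat.le_succ j) hk)) le_rfl
  have hBmeasG : ∀ n, Measurable[G n] (B n) := by
    intro n
    cases n with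
    | zero =>
      have : B 0 = fun _ => B 0 hne.some := funext fun ω => hB0 ω hne.some
      rw [this]; exact measurable_const
    | succ k => exact (hBpred k).measurable
  have hVmeasG : ∀ n, Measurable[G n] (V n) := by
    intro n
    cases n with
    | zero => simp only [hV, Finset.range_zero, Finset.sum_empty]; exact measurable_const
    | succ m =>
      refine Finset.measurable_sum _ fun k hk => ?_
      exact hBmeasF k m (by simp at hk; omega)
  have hSmeasG : ∀ n, Measurable[G n] (S n) := by
    intro n
    cases n with
    | zero => simp only [hS, Finset.range_zero, Finset.sum_empty]; exact measurable_const
    | succ m =>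
      refine Finset.measurable_sum _ fun k hk => ?_
      have hk' : k ≤ m := by simp at hk; omega
      exact (hBmeasF k m hk').mul ((hXmeasF k m hk').sub measurable_const)
  have hMmeasG : ∀ n, Measurable[G n] (M n) := by
    intro n
    exact (((hSmeasG n).const_mul _).sub ((hVmeasG n).const_mul _)).exp
  have hMmeas : ∀ n, Measurable (M n) := fun n => (hMmeasG n).mono (hG_le n) le_rfl
  have hPsetG : ∀ k n, k ≤ n → MeasurableSet[G n] {ω | P k ω} := by
    intro k n hk
    refine hG_mono k n hk _ ?_
    exact (measurableSet_le measurable_const (hVmeasG k)).inter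
      (measurableSet_lt ((hVmeasG k).const_mul δ) ((hSmeasG k).const_mul σ))
  have hPset : ∀ k, MeasurableSet {ω | P k ω} := fun k => hG_le k _ (hPsetG k k le_rfl)
  -- independence
  have hIndep : ∀ n, Indep (G n) (MeasurableSpace.comap (X n) inferInstance) μ := by
    intro n
    cases n with
    | zero => exact indep_bot_left _
    | succ k =>
      have hd : Disjoint (Set.Iic k) ({k + 1} : Set ℕ) := by
        rw [Set.disjoint_singleton_right]; simp
      have h := indep_iSup_of_disjoint (μ := μ)
        (fun i => (hXmeas i).measurable.comap_le)
        ((iIndepFun_iff_iIndep _ _ _).mp hind) hd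
      simp at h; exact h
  -- bounds
  have hBle : ∀ k ω, 0 ≤ B k ω ∧ B k ω ≤ 1 := by
    intro k ω; rcases hB01 k ω with h | h <;> rw [h] <;> norm_num
  have hXθbd : ∀ k ω, |X k ω - θ| ≤ 1 := by
    intro k ω
    rcases hX01 k ω with h | h <;> rw [h, abs_le] <;> constructor <;> linarith
  have hSbd : ∀ n ω, |S n ω| ≤ n := by
    intro n ω
    calc |S n ω| ≤ ∑ k ∈ Finset.range n, |B k ω * (X k ω - θ)| := Finset.abs_sum_le_sum_abs _ _
      _ ≤ ∑ k ∈ Finset.range n, 1 := by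
          refine Finset.sum_le_sum fun k _ => ?_
          rw [abs_mul]
          calc |B k ω| * |X k ω - θ| ≤ 1 * 1 := by
                refine mul_le_mul ?_ (hXθbd k ω) (abs_nonneg _) zero_le_one
                rw [abs_le]; constructor <;> linarith [(hBle k ω).1, (hBle k ω).2]
            _ = 1 := by norm_num
      _ = n := by simp
  have hVnonneg : ∀ n ω, 0 ≤ V n ω :=
    fun n ω => Finset.sum_nonneg fun k _ => (hBle k ω).1
  have hMpos : ∀ n ω, 0 < M n ω := fun n ω => Real.exp_pos _
  have hMbd : ∀ n ω, M n ω ≤ Real.exp (4 * δ * n) := by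
    intro n ω
    rw [hM]
    refine Real.exp_le_exp.mpr ?_
    have h1 : 4 * σ * δ * S n ω ≤ 4 * δ * n := by
      have : 4 * σ * δ * S n ω ≤ |4 * σ * δ * S n ω| := le_abs_self _
      rw [abs_mul, abs_mul, abs_mul, hσabs, abs_of_pos hδ] at this
      norm_num at this
      have h2 : |S n ω| ≤ (n : ℝ) := hSbd n ω
      have h3 : 4 * δ * |S n ω| ≤ 4 * δ * n :=
        mul_le_mul_of_nonneg_left h2 (by positivity)
      nlinarith
    nlinarith [mul_nonneg (mul_nonneg (by norm_num : (0:ℝ) ≤ 2) (sq_nonneg δ)) (hVnonneg n ω)]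
  have hbdint : ∀ (f : Ω → ℝ) (C : ℝ), Measurable f → (∀ ω, ‖f ω‖ ≤ C) → Integrable f μ :=
    fun f C hmf hb => (integrable_const C).mono' hmf.aestronglyMeasurable (ae_of_all _ hb)
  have hMint : ∀ n, Integrable (M n) μ := by
    intro n
    refine hbdint _ (Real.exp (4 * δ * n)) (hMmeas n) fun ω => ?_
    rw [Real.norm_eq_abs, abs_of_pos (hMpos n ω)]
    exact hMbd n ω
  -- core supermartingale step
  have hcore : ∀ n (A : Set Ω), MeasurableSet[G n] A →
      ∫ ω in A, M (n + 1) ω ∂μ ≤ ∫ ω in A, M n ω ∂μ := by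
    intro n A hA
    have hAamb : MeasurableSet A := hG_le n _ hA
    set C : Set Ω := {ω | B n ω = 1} with hC
    have hCG : MeasurableSet[G n] C := hBmeasG n (measurableSet_singleton 1)
    have hCamb : MeasurableSet C := hG_le n _ hCG
    set A1 : Set Ω := A ∩ C with hA1
    set A0 : Set Ω := A ∩ Cᶜ with hA0
    have hA1G : MeasurableSet[G n] A1 := hA.inter hCG
    have hA1amb : MeasurableSet A1 := hAamb.inter hCamb
    have hA0amb : MeasurableSet A0 := hAamb.inter hCamb.compl
    have hsplit : A = A0 ∪ A1 := by
      rw [hA0, hA1, Set.union_comm]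
      exact (Set.inter_union_compl A C).symm
    have hdisj : Disjoint A0 A1 := by
      rw [Set.disjoint_left]
      rintro ω ⟨-, h0⟩ ⟨-, h1⟩
      exact h0 h1
    have hMsucc : ∀ ω, M (n+1) ω
        = M n ω * Real.exp (4*σ*δ*(B n ω * (X n ω - θ)) - 2*δ^2 * B n ω) := by
      intro ω
      rw [hM]; dsimp only
      rw [← Real.exp_add]
      congr 1
      rw [hS, hV]; dsimp only
      rw [Finset.sum_range_succ, Finset.sum_range_succ]
      ring
    have h0 : ∫ ω in A0, M (n+1) ω ∂μ = ∫ ω in A0, M n ω ∂μ := by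
      refine setIntegral_congr_fun hA0amb fun ω hω => ?_
      have hB0' : B n ω = 0 := by
        rcases hB01 n ω with h | h
        · exact h
        · exact absurd h hω.2
      rw [hMsucc ω, hB0']
      simp
    set g : Ω → ℝ := fun ω => Real.exp (4*σ*δ*(X n ω - θ)) with hg
    set f : Ω → ℝ := A1.indicator (M n) with hf
    have hgmeas_comap : Measurable[MeasurableSpace.comap (X n) inferInstance] g := by
      have h1 : Measurable[MeasurableSpace.comap (X n) inferInstance] (X n) :=
        Measurable.of_comap_le le_rfl
      exact (Real.measurable_exp.comp ((measurable_id.sub measurable_const).const_mul _)).comp h1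
    have hgmeas : Measurable g := hgmeas_comap.mono (hXmeas n).measurable.comap_le le_rfl
    have hfmeasG : Measurable[G n] f := (hMmeasG n).indicator hA1G
    have hfmeas : Measurable f := hfmeasG.mono (hG_le n) le_rfl
    have hindepfg : IndepFun f g μ := by
      rw [IndepFun_iff_Indep]
      have h1 : MeasurableSpace.comap f inferInstance ≤ G n := measurable_iff_comap_le.mp hfmeasG
      have h2 : MeasurableSpace.comap g inferInstance
          ≤ MeasurableSpace.comap (X n) inferInstance := measurable_iff_comap_le.mp hgmeas_comap
      rw [Indep_iff]
      have h3 := (Indep_iff _ _ _).mp (hIndep n)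
      intro t1 t2 ht1 ht2
      exact h3 t1 t2 (h1 _ ht1) (h2 _ ht2)
    have hfint : Integrable f μ := by
      refine hbdint _ (Real.exp (4*δ*n)) hfmeas fun ω => ?_
      rw [Real.norm_eq_abs, hf]
      by_cases hω : ω ∈ A1
      · rw [Set.indicator_of_mem hω, abs_of_pos (hMpos n ω)]
        exact hMbd n ω
      · rw [Set.indicator_of_notMem hω]
        simpa using (Real.exp_pos _).le
    have hgint : Integrable g μ := by
      refine hbdint _ (Real.exp (4*δ)) hgmeas fun ω => ?_
      rw [Real.norm_eq_abs, abs_of_pos (Real.exp_pos _)]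
      refine Real.exp_le_exp.mpr ?_
      have h1 := le_abs_self (4*σ*δ*(X n ω - θ))
      rw [abs_mul, abs_mul, abs_mul, hσabs, abs_of_pos hδ] at h1
      norm_num at h1
      have h3 : 4 * δ * |X n ω - θ| ≤ 4 * δ * 1 :=
        mul_le_mul_of_nonneg_left (hXθbd n ω) (by positivity)
      nlinarith
    have hgmgf : ∫ ω, g ω ∂μ ≤ Real.exp (2*δ^2) := by
      have h1 := bernoulli_mgf_le μ (X n) (hXmeas n).measurable (hX01 n) hθ0 hθ1 (hmean n) (4*σ*δ)
      have harg : (4*σ*δ)^2/8 = 2*δ^2 := by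
        rw [mul_pow, mul_pow, hσ1]; ring
      rw [harg] at h1
      exact h1
    have hfnonneg : 0 ≤ ∫ ω, f ω ∂μ :=
      integral_nonneg fun ω => Set.indicator_nonneg (fun ω' _ => (hMpos n ω').le) ω
    have h1 : ∫ ω in A1, M (n+1) ω ∂μ = Real.exp (-(2*δ^2)) * ∫ ω, f ω * g ω ∂μ := by
      have e1 : ∫ ω in A1, M (n+1) ω ∂μ
          = ∫ ω in A1, Real.exp (-(2*δ^2)) * (M n ω * g ω) ∂μ := by
        refine setIntegral_congr_fun hA1amb fun ω hω => ?_
        have hB1' : B n ω = 1 := hω.2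
        rw [hMsucc ω, hB1']
        simp only [hg, hM]
        rw [← Real.exp_add, ← Real.exp_add, ← Real.exp_add]
        congr 1
        ring
      rw [e1, integral_const_mul]
      congr 1
      rw [← integral_indicator hA1amb]
      congr 1
      funext ω
      by_cases hω : ω ∈ A1
      · rw [hf]; simp [Set.indicator_of_mem hω]
      · rw [hf]; simp [Set.indicator_of_notMem hω]
    have h2 : ∫ ω, f ω * g ω ∂μ = (∫ ω, f ω ∂μ) * ∫ ω, g ω ∂μ := by
      have := hindepfg.integral_mul_eq_mul_integral hfint.aestronglyMeasurable hgint.aestronglyMeasurable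
      simpa [Pi.mul_apply] using this
    have h3 : ∫ ω in A1, M (n+1) ω ∂μ ≤ ∫ ω in A1, M n ω ∂μ := by
      rw [h1, h2]
      have e2 : Real.exp (-(2*δ^2)) * ((∫ ω, f ω ∂μ) * ∫ ω, g ω ∂μ)
          ≤ Real.exp (-(2*δ^2)) * ((∫ ω, f ω ∂μ) * Real.exp (2*δ^2)) :=
        mul_le_mul_of_nonneg_left (mul_le_mul_of_nonneg_left hgmgf hfnonneg) (Real.exp_pos _).le
      refine e2.trans ?_
      have e3 : Real.exp (-(2*δ^2)) * ((∫ ω, f ω ∂μ) * Real.exp (2*δ^2)) = ∫ ω, f ω ∂μ := by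
        rw [Real.exp_neg]
        field_simp
      rw [e3, hf, integral_indicator hA1amb]
    calc ∫ ω in A, M (n+1) ω ∂μ
        = ∫ ω in A0, M (n+1) ω ∂μ + ∫ ω in A1, M (n+1) ω ∂μ := by
          conv_lhs => rw [hsplit]
          exact setIntegral_union hdisj hA1amb ((hMint (n+1)).integrableOn) ((hMint (n+1)).integrableOn)
      _ ≤ ∫ ω in A0, M n ω ∂μ + ∫ ω in A1, M n ω ∂μ := by
          rw [h0]; linarith
      _ = ∫ ω in A, M n ω ∂μ := by
          conv_rhs => rw [hsplit]
          exact (setIntegral_union hdisj hA1amb ((hMint n).integrableOn) ((hMint n).integrableOn)).symm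
  -- hitting time and stopped process
  set τ : ℕ → Ω → ℕ := fun n ω => if h : ∃ k, k ≤ n ∧ P k ω then Nat.find h else n with hτ
  set W : ℕ → Ω → ℝ := fun n ω => M (τ n ω) ω with hW
  have hτ_le : ∀ n ω, τ n ω ≤ n := by
    intro n ω
    rw [hτ]; dsimp only
    split
    · next h => exact (Nat.find_spec h).1
    · exact le_rfl
  have hτ_hit : ∀ n ω (h : ∃ k, k ≤ n ∧ P k ω), τ n ω = Nat.find h := by
    intro n ω h
    rw [hτ]; dsimp only
    rw [dif_pos h]
  have hτ_nohit : ∀ n ω, (¬ ∃ k, k ≤ n ∧ P k ω) → τ n ω = n := by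
    intro n ω h
    rw [hτ]; dsimp only
    rw [dif_neg h]
  set N : ℕ → Set Ω := fun n => {ω | ∀ k, k ≤ n → ¬ P k ω} with hN
  have hNG : ∀ n, MeasurableSet[G n] (N n) := by
    intro n
    have hrw : N n = ⋂ k, ⋂ (_ : k ≤ n), {ω | P k ω}ᶜ := by
      ext ω; simp [hN]
    rw [hrw]
    exact MeasurableSet.iInter fun k => MeasurableSet.iInter fun hk => (hPsetG k n hk).compl
  have hNamb : ∀ n, MeasurableSet (N n) := fun n => hG_le n _ (hNG n)
  have hWid : ∀ n ω, W (n+1) ω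
      = W n ω + Set.indicator (N n) (fun ω' => M (n+1) ω' - M n ω') ω := by
    intro n ω
    by_cases hhit : ∃ k, k ≤ n ∧ P k ω
    · have hmem : ω ∉ N n := by
        obtain ⟨k, hk, hPk⟩ := hhit
        intro hmemN
        exact hmemN k hk hPk
      rw [Set.indicator_of_notMem hmem, add_zero]
      have hhit' : ∃ k, k ≤ n + 1 ∧ P k ω := by
        obtain ⟨k, hk, hPk⟩ := hhit
        exact ⟨k, hk.trans (Nat.le_succ n), hPk⟩
      rw [hW]; dsimp only
      rw [hτ_hit n ω hhit, hτ_hit (n+1) ω hhit']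
      have h1 : Nat.find hhit' ≤ Nat.find hhit :=
        Nat.find_le ⟨(Nat.find_spec hhit).1.trans (Nat.le_succ n), (Nat.find_spec hhit).2⟩
      have h2 : Nat.find hhit ≤ Nat.find hhit' :=
        Nat.find_le ⟨h1.trans (Nat.find_spec hhit).1, (Nat.find_spec hhit').2⟩
      rw [le_antisymm h1 h2]
    · have hmem : ω ∈ N n := fun k hk hPk => hhit ⟨k, hk, hPk⟩
      rw [Set.indicator_of_mem hmem]
      have hWn : W n ω = M n ω := by
        rw [hW]; dsimp only
        rw [hτ_nohit n ω hhit]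
      have hWn1 : W (n+1) ω = M (n+1) ω := by
        rw [hW]; dsimp only
        by_cases h2 : ∃ k, k ≤ n + 1 ∧ P k ω
        · rw [hτ_hit (n+1) ω h2]
          have hfind : Nat.find h2 = n + 1 := by
            refine le_antisymm (Nat.find_spec h2).1 ?_
            by_contra hlt
            push_neg at hlt
            exact hhit ⟨Nat.find h2, Nat.lt_succ_iff.mp hlt, (Nat.find_spec h2).2⟩
          rw [hfind]
        · rw [hτ_nohit (n+1) ω h2]
      rw [hWn, hWn1]; ring
  have hτ0 : ∀ ω, τ 0 ω = 0 := fun ω => Nat.le_zero.mp (hτ_le 0 ω)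
  have hWmeas : ∀ n, Measurable (W n) := by
    intro n
    induction n with
    | zero =>
      have hrw : W 0 = M 0 := funext fun ω => by rw [hW]; dsimp only; rw [hτ0 ω]
      rw [hrw]; exact hMmeas 0
    | succ k ih =>
      have hrw : W (k+1) = fun ω => W k ω
          + Set.indicator (N k) (fun ω' => M (k+1) ω' - M k ω') ω :=
        funext fun ω => hWid k ω
      rw [hrw]
      have hsubm : Measurable (fun ω' => M (k+1) ω' - M k ω') := (hMmeas (k+1)).sub (hMmeas k)
      exact ih.add (hsubm.indicator (hNamb k))
  have hWpos : ∀ n ω, 0 < W n ω := fun n ω => hMpos _ ω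
  have hWbd : ∀ n ω, W n ω ≤ Real.exp (4*δ*n) := by
    intro n ω
    calc W n ω ≤ Real.exp (4*δ*(τ n ω)) := hMbd _ ω
      _ ≤ Real.exp (4*δ*n) := by
          refine Real.exp_le_exp.mpr ?_
          have hcast : (τ n ω : ℝ) ≤ n := Nat.cast_le.mpr (hτ_le n ω)
          nlinarith [hδ]
  have hWint : ∀ n, Integrable (W n) μ := by
    intro n
    refine hbdint _ (Real.exp (4*δ*n)) (hWmeas n) fun ω => ?_
    rw [Real.norm_eq_abs, abs_of_pos (hWpos n ω)]
    exact hWbd n ω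
  have hW0 : ∫ ω, W 0 ω ∂μ = 1 := by
    have hrw : W 0 = fun _ => (1:ℝ) := funext fun ω => by
      rw [hW]; dsimp only
      rw [hτ0 ω, hM]; dsimp only
      simp [hS, hV]
    rw [hrw]; simp
  have hWdec : ∀ n, ∫ ω, W (n+1) ω ∂μ ≤ ∫ ω, W n ω ∂μ := by
    intro n
    have hid : (fun ω => W (n+1) ω) = fun ω => W n ω
        + Set.indicator (N n) (fun ω' => M (n+1) ω' - M n ω') ω := funext fun ω => hWid n ω
    have hsubint : Integrable (fun ω' => M (n+1) ω' - M n ω') μ := (hMint (n+1)).sub (hMint n)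
    have hintind : Integrable (fun ω => Set.indicator (N n) (fun ω' => M (n+1) ω' - M n ω') ω) μ :=
      hsubint.indicator (hNamb n)
    rw [hid, integral_add (hWint n) hintind]
    have hind0 : ∫ ω, Set.indicator (N n) (fun ω' => M (n+1) ω' - M n ω') ω ∂μ ≤ 0 := by
      rw [integral_indicator (hNamb n),
        integral_sub ((hMint (n+1)).integrableOn) ((hMint n).integrableOn)]
      have := hcore n (N n) (hNG n)
      linarith
    linarith
  have hWle1 : ∀ n, ∫ ω, W n ω ∂μ ≤ 1 := by
    intro n
    induction n with
    | zero => rw [hW0]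
    | succ k ih => exact (hWdec k).trans ih
  set E : ℕ → Set Ω := fun n => {ω | ∃ k, k ≤ n ∧ P k ω} with hE
  have hEamb : ∀ n, MeasurableSet (E n) := by
    intro n
    have hrw : E n = ⋃ k, ⋃ (_ : k ≤ n), {ω | P k ω} := by
      ext ω
      simp only [hE, Set.mem_setOf_eq, Set.mem_iUnion, exists_prop]
    rw [hrw]
    exact MeasurableSet.iUnion fun k => MeasurableSet.iUnion fun hk => hPset k
  have hkey : ∀ n ω, ω ∈ E n → Real.exp (2*δ^2*c) ≤ W n ω := by
    intro n ω hω
    have h : ∃ k, k ≤ n ∧ P k ω := hω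
    rw [hW]; dsimp only
    rw [hτ_hit n ω h]
    have hPk := (Nat.find_spec h).2
    rw [hM]; dsimp only
    refine Real.exp_le_exp.mpr ?_
    have h1 : 4*δ*(δ * V (Nat.find h) ω) < 4*δ*(σ * S (Nat.find h) ω) :=
      mul_lt_mul_of_pos_left hPk.2 (by positivity)
    have h2 : 2*δ^2*c ≤ 2*δ^2*V (Nat.find h) ω :=
      mul_le_mul_of_nonneg_left hPk.1 (by positivity)
    nlinarith
  have hEbound : ∀ n, μ (E n) ≤ ENNReal.ofReal (Real.exp (-(2*δ^2*c))) := by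
    intro n
    have h1 : (μ (E n)).toReal * Real.exp (2*δ^2*c) ≤ 1 := by
      calc (μ (E n)).toReal * Real.exp (2*δ^2*c)
          = ∫ _ω in E n, Real.exp (2*δ^2*c) ∂μ := by
            rw [setIntegral_const, smul_eq_mul, measureReal_def]
        _ ≤ ∫ ω in E n, W n ω ∂μ :=
            setIntegral_mono_on ((integrable_const _).integrableOn)
              ((hWint n).integrableOn) (hEamb n) (fun ω hω => hkey n ω hω)
        _ ≤ ∫ ω, W n ω ∂μ :=
            setIntegral_le_integral (hWint n) (ae_of_all _ fun ω => (hWpos n ω).le)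
        _ ≤ 1 := hWle1 n
    have h2 : (μ (E n)).toReal ≤ Real.exp (-(2*δ^2*c)) := by
      rw [Real.exp_neg, inv_eq_one_div, le_div_iff₀ (Real.exp_pos _)]
      linarith
    exact (ENNReal.le_ofReal_iff_toReal_le (measure_ne_top μ _) (Real.exp_pos _).le).mpr h2
  have hsub : {ω | ∃ n, c ≤ V n ω ∧ δ * V n ω < σ * S n ω} ⊆ ⋃ n, E n := by
    rintro ω ⟨n, hn⟩
    exact Set.mem_iUnion.mpr ⟨n, ⟨n, le_rfl, hn⟩⟩
  have hEmono : Monotone E := by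
    rintro a b hab ω ⟨k, hk, hPk⟩
    exact ⟨k, hk.trans hab, hPk⟩
  show μ {ω | ∃ n, c ≤ V n ω ∧ δ * V n ω < σ * S n ω} ≤ _
  calc μ {ω | ∃ n, c ≤ V n ω ∧ δ * V n ω < σ * S n ω}
      ≤ μ (⋃ n, E n) := measure_mono hsub
    _ = ⨆ n, μ (E n) := Directed.measure_iUnion (hEmono.directed_le)
    _ ≤ ENNReal.ofReal (Real.exp (-(2*δ^2*c))) := iSup_le hEbound


theorem deviation_bound_well_sampled_rounds
    {Ω : Type*} {mΩ : MeasurableSpace Ω} (μ : Measure Ω) [IsProbabilityMeasure μ]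
    (θ : ℝ) (hθ : θ ∈ Set.Ioo (0 : ℝ) 1)
    -- i.i.d. Bernoulli(θ) rewards of the arm under consideration
    (X : ℕ → Ω → ℝ) (hXmeas : ∀ n, StronglyMeasurable (X n))
    (hX01 : ∀ n ω, X n ω = 0 ∨ X n ω = 1)
    (hind : iIndepFun X μ)
    (hmean : ∀ n, (μ {ω | X n ω = 1}).toReal = θ)
    -- sampling rule with values in {0,1}, predictable w.r.t. the reward filtration
    (B : ℕ → Ω → ℝ) (hB01 : ∀ n ω, B n ω = 0 ∨ B n ω = 1)
    (hB0 : ∀ ω ω', B 0 ω = B 0 ω')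
    (hBpred : ∀ n, StronglyMeasurable[(Filtration.natural X hXmeas) n] (B (n + 1)))
    -- empirical counts and means
    (t : ℕ → Ω → ℝ) (ht : ∀ n ω, t n ω = ∑ s ∈ Finset.range n, B s ω)
    (hatθ : ℕ → Ω → ℝ)
    (hhatθ : ∀ n ω, hatθ n ω =
      if t n ω = 0 then 0
      else (∑ s ∈ Finset.range n, B s ω * X s ω) / t n ω)
    -- the random set of rounds and its decomposition
    (ε δ : ℝ) (hε : 0 < ε) (hδ : 0 < δ)
    (Λ : Ω → Set ℕ) (Λs : ℕ → Ω → Set ℕ)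
    (hcover : ∀ ω, Λ ω ⊆ ⋃ s : ℕ, ⋃ (_ : 1 ≤ s), Λs s ω)
    (hsingle : ∀ s ω, (Λs s ω).Subsingleton)
    (hmeasE : ∀ s n, MeasurableSet[(Filtration.natural X hXmeas) n] {ω | n ∈ Λs s ω})
    (hcount : ∀ s ω n, n ∈ Λs s ω → ε * s ≤ t n ω) :
    ∑' n : ℕ, (μ {ω | n ∈ Λ ω ∧ δ < |hatθ n ω - θ|}).toReal ≤ 1 / (ε * δ ^ 2) := by
  classical
  rcases isEmpty_or_nonempty Ω with hE | hne
  · have hz : ∀ n : ℕ, (μ {ω | n ∈ Λ ω ∧ δ < |hatθ n ω - θ|}).toReal = 0 := by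
      intro n
      have he : {ω | n ∈ Λ ω ∧ δ < |hatθ n ω - θ|} = ∅ := Set.eq_empty_of_isEmpty _
      rw [he]
      simp
    rw [tsum_congr hz, tsum_zero]
    positivity
  have hθ0 : 0 ≤ θ := hθ.1.le
  have hθ1 : θ ≤ 1 := hθ.2.le
  set ℱ := Filtration.natural X hXmeas with hℱ
  have hBmeas : ∀ k, Measurable (B k) := by
    intro k
    cases k with
    | zero =>
      have hb : B 0 = fun _ => B 0 hne.some := funext fun ω => hB0 ω hne.some
      rw [hb]; exact measurable_const
    | succ j => exact (hBpred j).measurable.mono (ℱ.le j) le_rfl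
  have hXmeas' : ∀ k, Measurable (X k) := fun k => (hXmeas k).measurable
  have htmeas : ∀ n, Measurable (t n) := by
    intro n
    have hb : t n = fun ω => ∑ k ∈ Finset.range n, B k ω := funext fun ω => ht n ω
    rw [hb]
    exact Finset.measurable_sum _ fun k _ => hBmeas k
  have hhatmeas : ∀ n, Measurable (hatθ n) := by
    intro n
    have hb : hatθ n = fun ω => if t n ω = 0 then 0
        else (∑ s ∈ Finset.range n, B s ω * X s ω) / t n ω := funext fun ω => hhatθ n ω
    rw [hb]
    have hset : MeasurableSet {ω | t n ω = 0} := htmeas n (measurableSet_singleton 0)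
    exact Measurable.ite hset measurable_const
      ((Finset.measurable_sum _ fun k _ => (hBmeas k).mul (hXmeas' k)).div (htmeas n))
  set dev : ℕ → Set Ω := fun n => {ω | δ < |hatθ n ω - θ|} with hdev
  have hdevmeas : ∀ n, MeasurableSet (dev n) :=
    fun n => measurableSet_lt measurable_const ((hhatmeas n).sub measurable_const).abs
  set D : ℕ → ℕ → Set Ω := fun n s => {ω | n ∈ Λs s ω} ∩ dev n with hD
  have hDmeas : ∀ n s, MeasurableSet (D n s) :=
    fun n s => (ℱ.le n _ (hmeasE s n)).inter (hdevmeas n)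
  have hstep1 : ∀ n, μ {ω | n ∈ Λ ω ∧ δ < |hatθ n ω - θ|} ≤ ∑' j : ℕ, μ (D n (j+1)) := by
    intro n
    refine le_trans (measure_mono ?_) (measure_iUnion_le _)
    intro ω hω
    obtain ⟨hΛ, hd⟩ := hω
    have hm := hcover ω hΛ
    rw [Set.mem_iUnion] at hm
    obtain ⟨s, hs⟩ := hm
    rw [Set.mem_iUnion] at hs
    obtain ⟨hs1, hmem⟩ := hs
    refine Set.mem_iUnion.mpr ⟨s - 1, ?_⟩
    have hs' : s - 1 + 1 = s := Nat.succ_pred_eq_of_pos hs1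
    rw [hD]; dsimp only
    rw [hs']
    exact ⟨hmem, hd⟩
  have hstep3 : ∀ s : ℕ, 1 ≤ s →
      ∑' n : ℕ, μ (D n s) ≤ ENNReal.ofReal (2 * Real.exp (-(2 * δ^2 * (ε * s)))) := by
    intro s hs
    have hdisj : Pairwise (Function.onFun Disjoint fun n => D n s) := by
      intro m n hmn
      rw [Function.onFun, Set.disjoint_left]
      rintro ω ⟨h1, -⟩ ⟨h2, -⟩
      exact hmn (hsingle s ω h1 h2)
    rw [← measure_iUnion hdisj (fun n => hDmeas n s)]
    set c : ℝ := ε * s with hcdef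
    have hcpos : 0 < c := mul_pos hε (by exact_mod_cast Nat.cast_pos.mpr hs)
    have hsubset : (⋃ n, D n s) ⊆
        {ω | ∃ n, c ≤ (∑ k ∈ Finset.range n, B k ω) ∧
          δ * (∑ k ∈ Finset.range n, B k ω)
            < 1 * (∑ k ∈ Finset.range n, B k ω * (X k ω - θ))}
        ∪ {ω | ∃ n, c ≤ (∑ k ∈ Finset.range n, B k ω) ∧
          δ * (∑ k ∈ Finset.range n, B k ω)
            < (-1) * (∑ k ∈ Finset.range n, B k ω * (X k ω - θ))} := by
      intro ω hω
      rw [Set.mem_iUnion] at hω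
      obtain ⟨n, hmem, hdev'⟩ := hω
      have htV : t n ω = ∑ k ∈ Finset.range n, B k ω := ht n ω
      have hct : c ≤ t n ω := hcount s ω n hmem
      have htpos : 0 < t n ω := lt_of_lt_of_le hcpos hct
      have hne0 : t n ω ≠ 0 := ne_of_gt htpos
      have hhat : hatθ n ω = (∑ k ∈ Finset.range n, B k ω * X k ω) / t n ω := by
        rw [hhatθ n ω, if_neg hne0]
      have hSsub : (∑ k ∈ Finset.range n, B k ω * X k ω) - θ * t n ω
          = ∑ k ∈ Finset.range n, B k ω * (X k ω - θ) := by
        rw [htV, Finset.mul_sum, ← Finset.sum_sub_distrib]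
        exact Finset.sum_congr rfl fun k _ => by ring
      have hdev'' : δ < |hatθ n ω - θ| := hdev'
      have habs : δ * t n ω < |∑ k ∈ Finset.range n, B k ω * (X k ω - θ)| := by
        rw [← hSsub]
        have h1 : hatθ n ω - θ
            = ((∑ k ∈ Finset.range n, B k ω * X k ω) - θ * t n ω) / t n ω := by
          rw [hhat]
          field_simp
        rw [h1, abs_div, abs_of_pos htpos, lt_div_iff₀ htpos] at hdev''
        linarith
      rw [lt_abs] at habs
      rcases habs with h | h
      · refine Set.mem_union_left _ ⟨n, ?_, ?_⟩
        · rw [← htV]; exact hct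
        · rw [one_mul, ← htV]; exact h
      · refine Set.mem_union_right _ ⟨n, ?_, ?_⟩
        · rw [← htV]; exact hct
        · rw [neg_one_mul, ← htV]; exact h
    calc μ (⋃ n, D n s) ≤ _ := measure_mono hsubset
      _ ≤ _ := measure_union_le _ _
      _ ≤ ENNReal.ofReal (Real.exp (-(2 * δ^2 * c)))
          + ENNReal.ofReal (Real.exp (-(2 * δ^2 * c))) := by
          refine add_le_add ?_ ?_
          · exact maximal_ineq μ θ hθ0 hθ1 X hXmeas hX01 hind hmean B hB01 hB0 hBpred
              δ hδ 1 (Or.inl rfl) c hcpos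
          · exact maximal_ineq μ θ hθ0 hθ1 X hXmeas hX01 hind hmean B hB01 hB0 hBpred
              δ hδ (-1) (Or.inr rfl) c hcpos
      _ = ENNReal.ofReal (2 * Real.exp (-(2 * δ^2 * (ε * s)))) := by
          rw [← ENNReal.ofReal_add (Real.exp_pos _).le (Real.exp_pos _).le]
          rw [hcdef]
          congr 1
          ring
  have hseries : ∑' j : ℕ, ENNReal.ofReal (2 * Real.exp (-(2 * δ^2 * (ε * ((j:ℕ)+1 : ℕ)))))
      ≤ ENNReal.ofReal (1 / (ε * δ^2)) := by
    set r : ℝ := Real.exp (-(2*δ^2*ε)) with hr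
    have hr0 : 0 < r := Real.exp_pos _
    have hr1 : r < 1 := by
      rw [hr, ← Real.exp_zero]
      exact Real.exp_lt_exp.mpr (by nlinarith [pow_pos hδ 2, hε])
    have hterm : ∀ j : ℕ, 2 * Real.exp (-(2 * δ^2 * (ε * ((j:ℕ)+1 : ℕ)))) = 2 * r * r ^ j := by
      intro j
      have h1 : Real.exp (-(2 * δ^2 * (ε * ((j:ℕ)+1 : ℕ)))) = r ^ (j+1) := by
        rw [hr, ← Real.exp_nat_mul]
        congr 1
        push_cast
        ring
      rw [h1, pow_succ']
      ring
    have hsum : Summable (fun j : ℕ => 2 * r * r ^ j) :=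
      (summable_geometric_of_lt_one hr0.le hr1).mul_left _
    calc ∑' j : ℕ, ENNReal.ofReal (2 * Real.exp (-(2 * δ^2 * (ε * ((j:ℕ)+1 : ℕ)))))
        = ∑' j : ℕ, ENNReal.ofReal (2 * r * r ^ j) := tsum_congr fun j => by rw [hterm j]
      _ = ENNReal.ofReal (∑' j : ℕ, 2 * r * r ^ j) :=
          (ENNReal.ofReal_tsum_of_nonneg (fun j => by positivity) hsum).symm
      _ ≤ ENNReal.ofReal (1 / (ε * δ^2)) := by
          refine ENNReal.ofReal_le_ofReal ?_
          rw [tsum_mul_left, tsum_geometric_of_lt_one hr0.le hr1]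
          have hx : 2*ε*δ^2 + 1 ≤ Real.exp (2*δ^2*ε) := by
            have h := Real.add_one_le_exp (2*δ^2*ε)
            linarith
          have hrinv : r * Real.exp (2*δ^2*ε) = 1 := by
            rw [hr, ← Real.exp_add]
            simp
          have h1r : 0 < 1 - r := by linarith
          rw [← div_eq_mul_inv, div_le_div_iff₀ h1r (by positivity)]
          have h2 : r * (2*ε*δ^2+1) ≤ 1 := by
            calc r * (2*ε*δ^2+1) ≤ r * Real.exp (2*δ^2*ε) :=
                  mul_le_mul_of_nonneg_left hx hr0.le
              _ = 1 := hrinv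
          nlinarith
  have hENN : ∑' n : ℕ, μ {ω | n ∈ Λ ω ∧ δ < |hatθ n ω - θ|}
      ≤ ENNReal.ofReal (1 / (ε * δ^2)) := by
    calc ∑' n : ℕ, μ {ω | n ∈ Λ ω ∧ δ < |hatθ n ω - θ|}
        ≤ ∑' n : ℕ, ∑' j : ℕ, μ (D n (j+1)) := ENNReal.tsum_le_tsum hstep1
      _ = ∑' j : ℕ, ∑' n : ℕ, μ (D n (j+1)) := ENNReal.tsum_comm
      _ ≤ ∑' j : ℕ, ENNReal.ofReal (2 * Real.exp (-(2 * δ^2 * (ε * ((j:ℕ)+1 : ℕ))))) :=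
          ENNReal.tsum_le_tsum fun j => hstep3 (j+1) (Nat.le_add_left 1 j)
      _ ≤ ENNReal.ofReal (1 / (ε * δ^2)) := hseries
  rw [← ENNReal.tsum_toReal_eq (fun n => measure_ne_top μ _)]
  calc (∑' n : ℕ, μ {ω | n ∈ Λ ω ∧ δ < |hatθ n ω - θ|}).toReal
      ≤ (ENNReal.ofReal (1 / (ε * δ^2))).toReal :=
        ENNReal.toReal_mono ENNReal.ofReal_ne_top hENN
    _ = 1 / (ε * δ^2) := ENNReal.toReal_ofReal (by positivity)
end
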